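/- O'Neil's product inequality: let (X, μ) be a σ-finite measure space, q ∈ (2,∞) and r = q/(q−2). If g ∈ L^q(X) and h ∈ L^{r,∞}(X), then the pointwise product g·h belongs to the Lorentz space L^{q',q}(X) with ‖g·h‖*_{q',q} ≤ C·‖g‖_q·‖h‖*_{r,∞}, where 1/q + 1/q' = 1. -/

import Mathlib

open MeasureTheory Set ENNReal NNReal

/-- The decreasing rearrangement of `g` with respect to `μ`. -/
noncomputable def decRearr {X : Type*} [MeasurableSpace X] (μ : Measure X) (g : X → ℂ)
    (t : ℝ) : ℝ≥0∞ :=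
  sInf {s : ℝ≥0∞ | μ {x | s < (‖g x‖₊ : ℝ≥0∞)} ≤ ENNReal.ofReal t}

/-- The Lorentz quasinorm `‖g‖*_{p,s}`. -/
noncomputable def lorentzNorm {X : Type*} [MeasurableSpace X] (μ : Measure X) (g : X → ℂ)
    (p s : ℝ) : ℝ≥0∞ :=
  (ENNReal.ofReal (s / p) *
      ∫⁻ t in Ioi (0 : ℝ), ENNReal.ofReal (t ^ (s / p - 1)) * decRearr μ g t ^ s) ^ (1 / s)

/-- The weak-`L^r` quasinorm `‖h‖*_{r,∞} = sup_{t>0} t · λ_h(t)^{1/r}`. -/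
noncomputable def weakNorm {X : Type*} [MeasurableSpace X] (μ : Measure X) (h : X → ℂ)
    (r : ℝ) : ℝ≥0∞ :=
  ⨆ t : ℝ, ENNReal.ofReal t * (μ {x | t < ‖h x‖}) ^ (1 / r)

section Aux
variable {X : Type*} [MeasurableSpace X] (μ : Measure X)


lemma dist_antitone (f : X → ℂ) :
    Antitone (fun s : ℝ≥0∞ => μ {x | s < (‖f x‖₊ : ℝ≥0∞)}) := fun a b hab =>
  measure_mono (fun x hx => lt_of_le_of_lt hab hx)

lemma decRearr_le (f : X → ℂ) {t : ℝ} {s : ℝ≥0∞}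
    (h : μ {x | s < (‖f x‖₊ : ℝ≥0∞)} ≤ ENNReal.ofReal t) : decRearr μ f t ≤ s :=
  sInf_le h

lemma decRearr_antitone (f : X → ℂ) : Antitone (decRearr μ f) := by
  intro a b hab
  exact sInf_le_sInf (fun s hs => le_trans hs (ENNReal.ofReal_le_ofReal hab))

lemma decRearr_measurable (f : X → ℂ) : Measurable (decRearr μ f) :=
  (decRearr_antitone μ f).measurable

lemma dist_decRearr_le (f : X → ℂ) (t : ℝ) :
    μ {x | decRearr μ f t < (‖f x‖₊ : ℝ≥0∞)} ≤ ENNReal.ofReal t := by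
  set a := decRearr μ f t with ha
  rcases eq_or_ne a ∞ with h | h
  · have : {x | a < (‖f x‖₊ : ℝ≥0∞)} = ∅ := by
      ext x; simp [h]
    simp [this]
  · have hUnion : {x | a < (‖f x‖₊ : ℝ≥0∞)} =
        ⋃ n : ℕ, {x | a + (n : ℝ≥0∞)⁻¹ < (‖f x‖₊ : ℝ≥0∞)} := by
      ext x
      simp only [mem_setOf_eq, mem_iUnion]
      constructor
      · intro hx
        have hpos : (‖f x‖₊ : ℝ≥0∞) - a ≠ 0 := by
          simpa [tsub_eq_zero_iff_le] using hx.not_ge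
        obtain ⟨n, hn⟩ := ENNReal.exists_inv_nat_lt hpos
        refine ⟨n, ?_⟩
        calc a + (n : ℝ≥0∞)⁻¹ < a + ((‖f x‖₊ : ℝ≥0∞) - a) :=
              ENNReal.add_lt_add_left h hn
          _ = (‖f x‖₊ : ℝ≥0∞) := add_tsub_cancel_of_le hx.le
      · rintro ⟨n, hn⟩
        exact lt_of_le_of_lt le_self_add hn
    have hmono : Monotone fun n : ℕ => {x | a + (n : ℝ≥0∞)⁻¹ < (‖f x‖₊ : ℝ≥0∞)} := by
      intro n m hnm x hx
      exact lt_of_le_of_lt (add_le_add_right (ENNReal.inv_le_inv.mpr (by exact_mod_cast hnm : (n:ℝ≥0∞) ≤ m)) a) hx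
    rw [hUnion, hmono.measure_iUnion]
    refine iSup_le fun n => ?_
    have hlt : a < a + (n : ℝ≥0∞)⁻¹ :=
      ENNReal.lt_add_right h (by simp)
    obtain ⟨s, hsS, hs⟩ := sInf_lt_iff.mp (lt_of_eq_of_lt ha.symm hlt : sInf _ < _)
    calc μ {x | a + (n : ℝ≥0∞)⁻¹ < (‖f x‖₊ : ℝ≥0∞)}
        ≤ μ {x | s < (‖f x‖₊ : ℝ≥0∞)} :=
          measure_mono fun x hx => lt_trans hs hx
      _ ≤ ENNReal.ofReal t := hsS




lemma decRearr_mul_le (g h : X → ℂ) {t : ℝ} (ht : 0 ≤ t) :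
    decRearr μ (g * h) t ≤ decRearr μ g (t / 2) * decRearr μ h (t / 2) := by
  set a := decRearr μ g (t / 2)
  set b := decRearr μ h (t / 2)
  apply decRearr_le
  have hsub : {x | a * b < (‖(g * h) x‖₊ : ℝ≥0∞)} ⊆
      {x | a < (‖g x‖₊ : ℝ≥0∞)} ∪ {x | b < (‖h x‖₊ : ℝ≥0∞)} := by
    intro x hx
    by_contra hc
    simp only [mem_union, mem_setOf_eq, not_or, not_lt] at hc
    have : (‖(g * h) x‖₊ : ℝ≥0∞) ≤ a * b := by
      have : (‖(g * h) x‖₊ : ℝ≥0∞) = (‖g x‖₊ : ℝ≥0∞) * (‖h x‖₊ : ℝ≥0∞) := by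
        simp [Pi.mul_apply, nnnorm_mul, ENNReal.coe_mul]
      rw [this]
      exact mul_le_mul' hc.1 hc.2
    exact hx.not_ge this
  calc μ {x | a * b < (‖(g * h) x‖₊ : ℝ≥0∞)}
      ≤ μ ({x | a < (‖g x‖₊ : ℝ≥0∞)} ∪ {x | b < (‖h x‖₊ : ℝ≥0∞)}) := measure_mono hsub
    _ ≤ μ {x | a < (‖g x‖₊ : ℝ≥0∞)} + μ {x | b < (‖h x‖₊ : ℝ≥0∞)} := measure_union_le _ _
    _ ≤ ENNReal.ofReal (t / 2) + ENNReal.ofReal (t / 2) :=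
        add_le_add (dist_decRearr_le μ g (t / 2)) (dist_decRearr_le μ h (t / 2))
    _ = ENNReal.ofReal t := by
        rw [← ENNReal.ofReal_add (by linarith) (by linarith)]; ring_nf

lemma decRearr_le_weakNorm (h : X → ℂ) {r : ℝ} (hr : 0 < r) {u : ℝ} (hu : 0 < u) :
    decRearr μ h u ≤ weakNorm μ h r * (ENNReal.ofReal u) ^ (-(1 / r)) := by
  set W := weakNorm μ h r with hW
  set B := W * (ENNReal.ofReal u) ^ (-(1 / r)) with hB
  have hu' : (0 : ℝ≥0∞) < ENNReal.ofReal u := ENNReal.ofReal_pos.mpr hu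
  have hune : ENNReal.ofReal u ≠ 0 := hu'.ne'
  have hunt : ENNReal.ofReal u ≠ ∞ := ENNReal.ofReal_ne_top
  rcases eq_or_ne W ∞ with hWt | hWt
  · have : B = ∞ := by
      rw [hB, hWt, ENNReal.top_mul]
      exact (ENNReal.rpow_pos hu' hunt).ne'
    rw [this]; exact le_top
  have hsub : Ioi B ⊆ {s : ℝ≥0∞ | μ {x | s < (‖h x‖₊ : ℝ≥0∞)} ≤ ENNReal.ofReal u} := by
    intro s hs
    rcases eq_or_ne s ∞ with rfl | hst
    · have : {x | (∞ : ℝ≥0∞) < (‖h x‖₊ : ℝ≥0∞)} = ∅ := by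
        ext x; simp
      simp [this]
    · have hs0 : s ≠ 0 := fun h0 => by simp [h0] at hs
      set c := s.toReal with hc
      have hc0 : 0 < c := ENNReal.toReal_pos hs0 hst
      have hsc : s = ENNReal.ofReal c := (ENNReal.ofReal_toReal hst).symm
      have hset : {x | c < ‖h x‖} = {x | s < (‖h x‖₊ : ℝ≥0∞)} := by
        ext x
        rw [hsc, mem_setOf_eq, mem_setOf_eq, ← enorm_eq_nnnorm, ← ofReal_norm,
          ENNReal.ofReal_lt_ofReal_iff_of_nonneg hc0.le]
      have hle : ENNReal.ofReal c * (μ {x | s < (‖h x‖₊ : ℝ≥0∞)}) ^ (1 / r) ≤ W := by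
        rw [← hset]; exact le_iSup (fun t => ENNReal.ofReal t * (μ {x | t < ‖h x‖}) ^ (1 / r)) c
      have hWlt : W < ENNReal.ofReal c * (ENNReal.ofReal u) ^ (1 / r) := by
        have := (ENNReal.mul_lt_mul_iff_left (c := (ENNReal.ofReal u) ^ (1 / r))
          (ENNReal.rpow_pos hu' hunt).ne' (ENNReal.rpow_ne_top_of_nonneg (by positivity) hunt)).mpr
          (hsc ▸ hs : B < ENNReal.ofReal c)
        calc W = W * ((ENNReal.ofReal u) ^ (-(1 / r)) * (ENNReal.ofReal u) ^ (1 / r)) := by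
                rw [← ENNReal.rpow_add _ _ hune hunt]; simp
          _ = B * (ENNReal.ofReal u) ^ (1 / r) := by rw [hB, mul_assoc]
          _ < ENNReal.ofReal c * (ENNReal.ofReal u) ^ (1 / r) := this
      have hkey : (μ {x | s < (‖h x‖₊ : ℝ≥0∞)}) ^ (1 / r) < (ENNReal.ofReal u) ^ (1 / r) := by
        have hc' : ENNReal.ofReal c ≠ 0 := (ENNReal.ofReal_pos.mpr hc0).ne'
        exact (ENNReal.mul_lt_mul_iff_right hc' ENNReal.ofReal_ne_top).mp (lt_of_le_of_lt hle hWlt)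
      have := ENNReal.rpow_lt_rpow hkey hr
      rw [← ENNReal.rpow_mul, ← ENNReal.rpow_mul, one_div_mul_cancel hr.ne',
        ENNReal.rpow_one, ENNReal.rpow_one] at this
      exact this.le
  have hIoi : sInf (Ioi B) = B := by
    refine le_antisymm ?_ (le_sInf fun c hc => (mem_Ioi.mp hc).le)
    by_contra hlt
    push_neg at hlt
    obtain ⟨c, hc1, hc2⟩ := exists_between hlt
    exact absurd (sInf_le (mem_Ioi.mpr hc1)) (not_le.mpr hc2)
  calc decRearr μ h u ≤ sInf (Ioi B) := sInf_le_sInf hsub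
    _ = B := hIoi

end Aux

section LC


lemma slice_integral {p : ℝ} (hp : 1 ≤ p) (c : ℝ≥0∞) :
    ∫⁻ s in Ioi (0:ℝ), {s : ℝ | ENNReal.ofReal s < c}.indicator
      (fun s => ENNReal.ofReal (p * s ^ (p - 1))) s = c ^ p := by
  have hp0 : 0 < p := lt_of_lt_of_le one_pos hp
  rcases eq_or_ne c 0 with rfl | hc0
  · have : {s : ℝ | ENNReal.ofReal s < 0} = ∅ := by ext s; simp
    simp [this, ENNReal.zero_rpow_of_pos hp0]
  rcases eq_or_ne c ∞ with rfl | hct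
  · have huniv : {s : ℝ | ENNReal.ofReal s < ∞} = univ := by ext s; simp [ENNReal.ofReal_lt_top]
    rw [huniv, indicator_univ]
    rw [ENNReal.top_rpow_of_pos hp0]
    have hle1 : ∫⁻ s in Ioi (1:ℝ), ENNReal.ofReal p ≤
        ∫⁻ s in Ioi (1:ℝ), ENNReal.ofReal (p * s ^ (p - 1)) := by
      refine setLIntegral_mono' measurableSet_Ioi fun s hs => ?_
      have h1 : (1:ℝ) ≤ s ^ (p - 1) := by
        calc (1:ℝ) = 1 ^ (p - 1) := (Real.one_rpow _).symm
          _ ≤ s ^ (p - 1) := Real.rpow_le_rpow zero_le_one (le_of_lt hs) (by linarith)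
      exact ENNReal.ofReal_le_ofReal (le_mul_of_one_le_right hp0.le h1 |>.trans_eq (by ring) |>.trans_eq rfl)
    have hle2 : ∫⁻ s in Ioi (1:ℝ), ENNReal.ofReal (p * s ^ (p - 1)) ≤
        ∫⁻ s in Ioi (0:ℝ), ENNReal.ofReal (p * s ^ (p - 1)) :=
      lintegral_mono_set (Ioi_subset_Ioi zero_le_one)
    have hconst : ∫⁻ s in Ioi (1:ℝ), (ENNReal.ofReal p : ℝ≥0∞) = ∞ := by
      rw [setLIntegral_const, Real.volume_Ioi, ENNReal.mul_top]
      exact (ENNReal.ofReal_pos.mpr hp0).ne'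
    exact eq_top_iff.mpr (hconst ▸ hle1.trans hle2)
  · set b := c.toReal with hb
    have hb0 : 0 < b := ENNReal.toReal_pos hc0 hct
    have hcb : c = ENNReal.ofReal b := (ENNReal.ofReal_toReal hct).symm
    have hset : {s : ℝ | ENNReal.ofReal s < c} = Iio b := by
      ext s
      simp only [mem_setOf_eq, mem_Iio]
      rcases le_or_gt s 0 with hs | hs
      · simp only [ENNReal.ofReal_eq_zero.mpr hs]
        exact ⟨fun _ => lt_of_le_of_lt hs hb0, fun _ => pos_iff_ne_zero.mpr hc0⟩
      · rw [hcb, ENNReal.ofReal_lt_ofReal_iff_of_nonneg hs.le]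
    rw [hset, lintegral_indicator measurableSet_Iio, Measure.restrict_restrict measurableSet_Iio,
      Set.Iio_inter_Ioi, hcb]
    have hint : IntegrableOn (fun s : ℝ => p * s ^ (p - 1)) (Ioo 0 b) volume := by
      have h1 : IntervalIntegrable (fun s : ℝ => s ^ (p - 1)) volume 0 b :=
        intervalIntegral.intervalIntegrable_rpow' (by linarith)
      have h2 := h1.const_mul p
      rw [intervalIntegrable_iff_integrableOn_Ioo_of_le hb0.le] at h2
      exact h2
    have hnn : 0 ≤ᵐ[volume.restrict (Ioo 0 b)] fun s : ℝ => p * s ^ (p - 1) := by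
      filter_upwards [self_mem_ae_restrict measurableSet_Ioo] with s hs
      have := Real.rpow_nonneg hs.1.le (p - 1)
      positivity
    rw [← ofReal_integral_eq_lintegral_ofReal hint hnn]
    have hval : ∫ s in Ioo (0:ℝ) b, p * s ^ (p - 1) = b ^ p := by
      rw [← integral_Ioc_eq_integral_Ioo, ← intervalIntegral.integral_of_le hb0.le,
        intervalIntegral.integral_const_mul, integral_rpow (Or.inl (by linarith))]
      have hpe : p - 1 + 1 = p := by ring
      rw [hpe, Real.zero_rpow hp0.ne']
      field_simp
      rw [sub_zero]
    rw [hval, ENNReal.ofReal_rpow_of_pos hb0]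

lemma lintegral_rpow_enn {α : Type*} [MeasurableSpace α] (ν : Measure α) [SFinite ν]
    {f : α → ℝ≥0∞} (hf : Measurable f) {p : ℝ} (hp : 1 ≤ p) :
    ∫⁻ a, f a ^ p ∂ν
      = ∫⁻ s in Ioi (0:ℝ), ENNReal.ofReal (p * s ^ (p - 1)) * ν {a | ENNReal.ofReal s < f a} := by
  have hp0 : 0 < p := lt_of_lt_of_le one_pos hp
  set S : Set (ℝ × α) := {z : ℝ × α | ENNReal.ofReal z.1 < f z.2} with hS
  have hSm : MeasurableSet S :=
    measurableSet_lt (measurable_fst.ennreal_ofReal) (hf.comp measurable_snd)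
  set F : ℝ × α → ℝ≥0∞ := S.indicator (fun z => ENNReal.ofReal (p * z.1 ^ (p - 1))) with hF
  have hFm : Measurable F := by
    refine Measurable.indicator ?_ hSm
    exact ((measurable_fst.pow measurable_const).const_mul p).ennreal_ofReal
  have step1 : ∀ s : ℝ, ENNReal.ofReal (p * s ^ (p - 1)) * ν {a | ENNReal.ofReal s < f a}
      = ∫⁻ a, F (s, a) ∂ν := by
    intro s
    have hmeas : MeasurableSet {a | ENNReal.ofReal s < f a} := hf measurableSet_Ioi
    have : ∀ a, F (s, a) = {a | ENNReal.ofReal s < f a}.indicator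
        (fun _ => ENNReal.ofReal (p * s ^ (p - 1))) a := by
      intro a
      simp only [hF, Set.indicator_apply, hS, mem_setOf_eq]
    simp_rw [this]
    rw [lintegral_indicator hmeas, setLIntegral_const]
  have step2 : ∀ a : α, (∫⁻ s in Ioi (0:ℝ), F (s, a)) = f a ^ p := by
    intro a
    have : ∀ s : ℝ, F (s, a) = {s : ℝ | ENNReal.ofReal s < f a}.indicator
        (fun s => ENNReal.ofReal (p * s ^ (p - 1))) s := by
      intro s
      simp only [hF, Set.indicator_apply, hS, mem_setOf_eq]
    simp_rw [this]
    exact slice_integral hp (f a)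
  calc ∫⁻ a, f a ^ p ∂ν = ∫⁻ a, (∫⁻ s in Ioi (0:ℝ), F (s, a)) ∂ν := by
        refine lintegral_congr fun a => (step2 a).symm
    _ = ∫⁻ s in Ioi (0:ℝ), (∫⁻ a, F (s, a) ∂ν) := by
        refine lintegral_lintegral_swap ?_
        exact (hFm.comp measurable_swap).aemeasurable
    _ = ∫⁻ s in Ioi (0:ℝ), ENNReal.ofReal (p * s ^ (p - 1)) * ν {a | ENNReal.ofReal s < f a} := by
        refine lintegral_congr fun s => (step1 s).symm

end LC

section Aux2
variable {X : Type*} [MeasurableSpace X] (μ : Measure X)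



lemma rearr_meas_le (g : X → ℂ) (s : ℝ≥0∞) :
    (volume.restrict (Ioi (0:ℝ))) {t : ℝ | s < decRearr μ g t} ≤ μ {x | s < (‖g x‖₊ : ℝ≥0∞)} := by
  rw [Measure.restrict_apply' measurableSet_Ioi]
  set L := μ {x | s < (‖g x‖₊ : ℝ≥0∞)} with hL
  rcases eq_or_ne L ∞ with h | h
  · rw [h]; exact le_top
  have hsub : {t : ℝ | s < decRearr μ g t} ∩ Ioi 0 ⊆ Ioc 0 L.toReal := by
    rintro t ⟨ht1, ht2⟩
    refine ⟨ht2, ?_⟩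
    by_contra hc
    push_neg at hc
    have hLt : L ≤ ENNReal.ofReal t := by
      rw [← ENNReal.ofReal_toReal h]
      exact ENNReal.ofReal_le_ofReal hc.le
    exact absurd (decRearr_le μ g hLt) (not_le.mpr ht1)
  calc volume ({t : ℝ | s < decRearr μ g t} ∩ Ioi 0) ≤ volume (Ioc 0 L.toReal) :=
        measure_mono hsub
    _ = ENNReal.ofReal L.toReal := by rw [Real.volume_Ioc, sub_zero]
    _ ≤ L := ENNReal.ofReal_toReal_le

lemma rearr_lintegral_rpow_le (g : X → ℂ) (hg : AEMeasurable (fun x => ‖g x‖) μ)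
    {p : ℝ} (hp : 1 < p) :
    ∫⁻ t in Ioi (0:ℝ), decRearr μ g t ^ p ≤ ∫⁻ x, (‖g x‖₊ : ℝ≥0∞) ^ p ∂μ := by
  have hp0 : 0 < p := lt_trans one_pos hp
  have h1 := lintegral_rpow_enn (volume.restrict (Ioi (0:ℝ)))
    (decRearr_measurable μ g) hp.le
  have h2 : ∫⁻ s in Ioi (0:ℝ), ENNReal.ofReal (p * s ^ (p - 1)) *
        (volume.restrict (Ioi (0:ℝ))) {t : ℝ | ENNReal.ofReal s < decRearr μ g t}
      ≤ ∫⁻ s in Ioi (0:ℝ), ENNReal.ofReal (p * s ^ (p - 1)) *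
        μ {x | ENNReal.ofReal s < (‖g x‖₊ : ℝ≥0∞)} :=
    lintegral_mono fun s => mul_le_mul_right (rearr_meas_le μ g _) _
  have h3 : ∫⁻ s in Ioi (0:ℝ), ENNReal.ofReal (p * s ^ (p - 1)) *
        μ {x | ENNReal.ofReal s < (‖g x‖₊ : ℝ≥0∞)}
      = ∫⁻ x, (‖g x‖₊ : ℝ≥0∞) ^ p ∂μ := by
    have key := lintegral_rpow_eq_lintegral_meas_lt_mul μ
      (ae_of_all _ fun x => norm_nonneg (g x)) hg hp0
    have hL : ∫⁻ x, ENNReal.ofReal (‖g x‖ ^ p) ∂μ = ∫⁻ x, (‖g x‖₊ : ℝ≥0∞) ^ p ∂μ := by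
      refine lintegral_congr fun x => ?_
      rw [← ENNReal.ofReal_rpow_of_nonneg (norm_nonneg _) hp0.le, ofReal_norm, enorm_eq_nnnorm]
    have hR : ∫⁻ s in Ioi (0:ℝ), ENNReal.ofReal (p * s ^ (p - 1)) *
          μ {x | ENNReal.ofReal s < (‖g x‖₊ : ℝ≥0∞)}
        = ENNReal.ofReal p * ∫⁻ s in Ioi (0:ℝ),
            μ {x | s < ‖g x‖} * ENNReal.ofReal (s ^ (p - 1)) := by
      rw [← lintegral_const_mul' _ _ ENNReal.ofReal_ne_top]
      refine setLIntegral_congr_fun measurableSet_Ioi (fun s hs => ?_)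
      have hset : {x | ENNReal.ofReal s < (‖g x‖₊ : ℝ≥0∞)} = {x | s < ‖g x‖} := by
        ext x
        rw [mem_setOf_eq, mem_setOf_eq, ← enorm_eq_nnnorm, ← ofReal_norm,
          ENNReal.ofReal_lt_ofReal_iff_of_nonneg (le_of_lt hs)]
      rw [hset, ENNReal.ofReal_mul hp0.le]
      ring
    rw [hR, ← key, hL]
  calc ∫⁻ t in Ioi (0:ℝ), decRearr μ g t ^ p = _ := h1
    _ ≤ _ := h2
    _ = _ := h3

lemma halfscale (F : ℝ → ℝ≥0∞) (hF : Measurable F) :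
    ∫⁻ t in Ioi (0:ℝ), F (t / 2) = 2 * ∫⁻ u in Ioi (0:ℝ), F u := by
  have hK : Measurable ((Ioi (0:ℝ)).indicator F) := hF.indicator measurableSet_Ioi
  have h1 : ∫⁻ t in Ioi (0:ℝ), F (t / 2)
      = ∫⁻ t, (Ioi (0:ℝ)).indicator F (2⁻¹ * t) := by
    rw [← lintegral_indicator measurableSet_Ioi]
    refine lintegral_congr fun t => ?_
    simp only [Set.indicator_apply, mem_Ioi]
    have : t / 2 = 2⁻¹ * t := by ring
    rw [this]
    have hiff : (0 < t) ↔ (0 < 2⁻¹ * t) := by constructor <;> intro h <;> linarith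
    by_cases ht : 0 < t
    · rw [if_pos ht, if_pos (hiff.mp ht)]
    · rw [if_neg ht, if_neg (fun hc => ht (hiff.mpr hc))]
  have h2 : ∫⁻ t, (Ioi (0:ℝ)).indicator F (2⁻¹ * t)
      = ∫⁻ y, (Ioi (0:ℝ)).indicator F y ∂(Measure.map (fun t : ℝ => 2⁻¹ * t) volume) :=
    (lintegral_map hK (measurable_const.mul measurable_id)).symm
  have h3 : Measure.map (fun t : ℝ => 2⁻¹ * t) volume = ENNReal.ofReal 2 • volume := by
    have := Real.map_volume_mul_left (a := 2⁻¹) (by norm_num)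
    simpa using this
  rw [h1, h2, h3, lintegral_smul_measure, lintegral_indicator measurableSet_Ioi]
  norm_num

end Aux2

/-- O'Neil's product inequality: for `q ∈ (2,∞)`, `r = q/(q-2)`, `g ∈ L^q` and
`h ∈ L^{r,∞}`, the product `g·h` lies in `L^{q',q}` with
`‖gh‖*_{q',q} ≤ C ‖g‖_q ‖h‖*_{r,∞}`, where `1/q + 1/q' = 1`. -/
theorem stmt8 {X : Type*} [MeasurableSpace X] (μ : Measure X) [SigmaFinite μ]
    (q : ℝ) (hq : 2 < q) :
    ∃ C : ℝ≥0, 0 < C ∧ ∀ g h : X → ℂ,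
      MemLp g (ENNReal.ofReal q) μ → weakNorm μ h (q / (q - 2)) < ∞ →
        lorentzNorm μ (g * h) (q / (q - 1)) q < ∞ ∧
        lorentzNorm μ (g * h) (q / (q - 1)) q
          ≤ C * eLpNorm g (ENNReal.ofReal q) μ * weakNorm μ h (q / (q - 2)) := by
  have hq0 : (0:ℝ) < q := by linarith
  have hq1 : (1:ℝ) < q := by linarith
  have hq2 : (0:ℝ) < q - 2 := by linarith
  have hq1' : (0:ℝ) < q - 1 := by linarith
  set r : ℝ := q / (q - 2) with hrdef
  have hr : 0 < r := div_pos hq0 hq2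
  have hrinv : 1 / r = (q - 2) / q := by rw [hrdef, one_div_div]
  have hCpos : (0:ℝ) < ((q - 1) * 2 ^ (q - 2) * 2) ^ (1 / q) := by
    apply Real.rpow_pos_of_pos
    have h2 : (0:ℝ) < (2:ℝ) ^ (q - 2) := Real.rpow_pos_of_pos two_pos _
    nlinarith
  refine ⟨Real.toNNReal (((q - 1) * 2 ^ (q - 2) * 2) ^ (1 / q)), Real.toNNReal_pos.mpr hCpos,
    fun g h hg hW => ?_⟩
  set W := weakNorm μ h r with hWdef
  have hWfin : W ≠ ∞ := hW.ne
  set E := eLpNorm g (ENNReal.ofReal q) μ with hEdef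
  have hEfin : E ≠ ∞ := hg.2.ne
  set G := decRearr μ g with hGdef
  -- exponent simplification
  have hqq : q / (q / (q - 1)) = q - 1 := by
    rw [div_div_eq_mul_div, mul_comm, mul_div_assoc, div_self hq0.ne', mul_one]
  -- pointwise bound
  have hpt : ∀ t ∈ Ioi (0:ℝ), ENNReal.ofReal (t ^ (q - 2)) * decRearr μ (g * h) t ^ q
      ≤ ENNReal.ofReal (2 ^ (q - 2)) * W ^ q * G (t / 2) ^ q := by
    intro t ht
    rw [mem_Ioi] at ht
    have ht2 : 0 < t / 2 := by linarith
    have hD : decRearr μ (g * h) t ≤ G (t / 2) * (W * ENNReal.ofReal (t / 2) ^ (-(1 / r))) :=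
      le_trans (decRearr_mul_le μ g h ht.le)
        (mul_le_mul_right (decRearr_le_weakNorm μ h hr ht2) _)
    have hDq : decRearr μ (g * h) t ^ q
        ≤ G (t / 2) ^ q * (W ^ q * (ENNReal.ofReal (t / 2) ^ (-(1 / r))) ^ q) := by
      calc decRearr μ (g * h) t ^ q
          ≤ (G (t / 2) * (W * ENNReal.ofReal (t / 2) ^ (-(1 / r)))) ^ q :=
            ENNReal.rpow_le_rpow hD hq0.le
        _ = G (t / 2) ^ q * (W ^ q * (ENNReal.ofReal (t / 2) ^ (-(1 / r))) ^ q) := by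
            rw [ENNReal.mul_rpow_of_nonneg _ _ hq0.le, ENNReal.mul_rpow_of_nonneg _ _ hq0.le]
    have hv : (ENNReal.ofReal (t / 2) ^ (-(1 / r))) ^ q
        = ENNReal.ofReal ((t / 2) ^ (-(q - 2))) := by
      rw [← ENNReal.rpow_mul]
      have : -(1 / r) * q = -(q - 2) := by
        rw [hrinv]; field_simp
      rw [this, ENNReal.ofReal_rpow_of_pos ht2]
    have hreal : t ^ (q - 2) * (t / 2) ^ (-(q - 2)) = 2 ^ (q - 2) := by
      rw [Real.rpow_neg ht2.le, ← div_eq_mul_inv, ← Real.div_rpow ht.le ht2.le]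
      have : t / (t / 2) = 2 := by field_simp
      rw [this]
    calc ENNReal.ofReal (t ^ (q - 2)) * decRearr μ (g * h) t ^ q
        ≤ ENNReal.ofReal (t ^ (q - 2)) *
            (G (t / 2) ^ q * (W ^ q * ENNReal.ofReal ((t / 2) ^ (-(q - 2))))) := by
          rw [← hv]; exact mul_le_mul_right hDq _
      _ = (ENNReal.ofReal (t ^ (q - 2)) * ENNReal.ofReal ((t / 2) ^ (-(q - 2)))) *
            W ^ q * G (t / 2) ^ q := by ring
      _ = ENNReal.ofReal (2 ^ (q - 2)) * W ^ q * G (t / 2) ^ q := by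
          rw [← ENNReal.ofReal_mul (Real.rpow_nonneg ht.le _), hreal]
  -- integral bound
  set J := ∫⁻ t in Ioi (0:ℝ), ENNReal.ofReal (t ^ (q / (q / (q - 1)) - 1)) *
      decRearr μ (g * h) t ^ q with hJdef
  have hGm : Measurable fun u : ℝ => G u ^ q :=
    (decRearr_measurable μ g).pow measurable_const
  have hgnorm : AEMeasurable (fun x => ‖g x‖) μ := hg.1.norm.aemeasurable
  have hIq : ∫⁻ x, (‖g x‖₊ : ℝ≥0∞) ^ q ∂μ = E ^ q := by
    rw [hEdef, eLpNorm_eq_lintegral_rpow_enorm_toReal (ENNReal.ofReal_pos.mpr hq0).ne'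
      ENNReal.ofReal_ne_top, ENNReal.toReal_ofReal hq0.le, ← ENNReal.rpow_mul,
      one_div_mul_cancel hq0.ne', ENNReal.rpow_one]
    rfl
  have hJle : J ≤ ENNReal.ofReal (2 ^ (q - 2)) * W ^ q * (2 * E ^ q) := by
    have hc_ne : ENNReal.ofReal (2 ^ (q - 2)) * W ^ q ≠ ∞ :=
      ENNReal.mul_ne_top ENNReal.ofReal_ne_top (ENNReal.rpow_ne_top_of_nonneg hq0.le hWfin)
    calc J ≤ ∫⁻ t in Ioi (0:ℝ), ENNReal.ofReal (2 ^ (q - 2)) * W ^ q * G (t / 2) ^ q := by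
          rw [hJdef, hqq]
          simp only [show q - 1 - 1 = q - 2 from by ring]
          exact setLIntegral_mono' measurableSet_Ioi hpt
      _ = ENNReal.ofReal (2 ^ (q - 2)) * W ^ q * ∫⁻ t in Ioi (0:ℝ), G (t / 2) ^ q :=
          lintegral_const_mul' _ _ hc_ne
      _ = ENNReal.ofReal (2 ^ (q - 2)) * W ^ q * (2 * ∫⁻ u in Ioi (0:ℝ), G u ^ q) := by
          rw [halfscale (fun u => G u ^ q) hGm]
      _ ≤ ENNReal.ofReal (2 ^ (q - 2)) * W ^ q * (2 * E ^ q) := by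
          refine mul_le_mul_right (mul_le_mul_right ?_ 2) _
          rw [← hIq]
          exact rearr_lintegral_rpow_le μ g hgnorm hq1
  have hfinal : lorentzNorm μ (g * h) (q / (q - 1)) q
      ≤ ↑(Real.toNNReal (((q - 1) * 2 ^ (q - 2) * 2) ^ (1 / q))) * E * W := by
    have h2pos : (0:ℝ) < (2:ℝ) ^ (q - 2) := Real.rpow_pos_of_pos two_pos _
    have hApos : (0:ℝ) < (q - 1) * 2 ^ (q - 2) * 2 := by nlinarith
    calc lorentzNorm μ (g * h) (q / (q - 1)) q
        = (ENNReal.ofReal (q - 1) * J) ^ (1 / q) := by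
          rw [lorentzNorm, hJdef, hqq]
      _ ≤ (ENNReal.ofReal (q - 1) * (ENNReal.ofReal (2 ^ (q - 2)) * W ^ q * (2 * E ^ q)))
            ^ (1 / q) := ENNReal.rpow_le_rpow (mul_le_mul_right hJle _) (by positivity)
      _ = (ENNReal.ofReal ((q - 1) * 2 ^ (q - 2) * 2) * (W ^ q * E ^ q)) ^ (1 / q) := by
          congr 1
          rw [ENNReal.ofReal_mul (by positivity), ENNReal.ofReal_mul (by positivity)]
          have h2 : ENNReal.ofReal (2:ℝ) = (2:ℝ≥0∞) := by norm_num
          rw [h2]; ring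
      _ = ENNReal.ofReal ((q - 1) * 2 ^ (q - 2) * 2) ^ (1 / q) * (W * E) := by
          rw [ENNReal.mul_rpow_of_nonneg _ _ (by positivity),
            ENNReal.mul_rpow_of_nonneg _ _ (by positivity), ← ENNReal.rpow_mul,
            ← ENNReal.rpow_mul, mul_one_div_cancel hq0.ne', ENNReal.rpow_one,
            ENNReal.rpow_one]
      _ = ↑(Real.toNNReal (((q - 1) * 2 ^ (q - 2) * 2) ^ (1 / q))) * E * W := by
          rw [ENNReal.ofReal_rpow_of_pos hApos]
          rw [ENNReal.ofReal]
          ring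
  refine ⟨lt_of_le_of_lt hfinal ?_, hfinal⟩
  exact ENNReal.mul_lt_top (ENNReal.mul_lt_top ENNReal.coe_lt_top hEfin.lt_top) hW
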